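/- Let N ≥ 2, α ∈ (0,1), β ∈ (α,1), and let u : ℝ^{N-1} → ℝ be of class C^{1,β} with inf u > 0. Then for every s ∈ ℝ^{N-1}, the functions t ↦ (u(s)−u(s−t)−t·∇u(s−t)) / (|t|² + (u(s)−u(s−t))²)^{(N+α)/2} and t ↦ (u(s)+u(s−t)+t·∇u(s−t)) / (|t|² + (u(s)+u(s−t))²)^{(N+α)/2} are Lebesgue integrable on ℝ^{N-1}. -/

import Mathlib

open MeasureTheory Real Filter Topology

open Set Module

noncomputable section

abbrev ES (m : ℕ) : Type := EuclideanSpace ℝ (Fin (m + 1))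

lemma integrableOn_norm_rpow_ball (m : ℕ) {q : ℝ} (h0 : 0 < q) (hq : q < (m : ℝ) + 1) :
    IntegrableOn (fun x : ES m => ‖x‖ ^ (-q)) (Metric.ball 0 1) := by
  have hdim : (finrank ℝ (ES m) : ℝ) = (m : ℝ) + 1 := by
    simp [finrank_euclideanSpace]
  constructor
  · exact (Measurable.aestronglyMeasurable (by fun_prop)).restrict
  · have hnn : ∀ x : ES m, 0 ≤ ‖x‖ ^ (-q) := fun x => rpow_nonneg (norm_nonneg x) _
    have hmeas : Measurable fun x : ES m => ‖x‖ ^ (-q) := by fun_prop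
    have heq : (∫⁻ a : ES m in Metric.ball 0 1, ‖‖a‖ ^ (-q)‖ₑ)
        = ∫⁻ a : ES m in Metric.ball 0 1, ENNReal.ofReal (‖a‖ ^ (-q)) :=
      lintegral_enorm_of_nonneg fun x => hnn x
    rw [HasFiniteIntegral, heq,
      lintegral_eq_lintegral_meas_le _ (Eventually.of_forall hnn) hmeas.aemeasurable]
    set μ' := (volume : Measure (ES m)).restrict (Metric.ball 0 1) with hμ'
    set B := (volume : Measure (ES m)) (Metric.ball 0 1) with hB
    have hBfin : B < ⊤ := measure_ball_lt_top
    have hub : ∀ S : Set (ES m), μ' S ≤ B := by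
      intro S
      calc μ' S ≤ μ' univ := measure_mono (subset_univ _)
        _ = B := by rw [hμ', Measure.restrict_apply_univ]
    have hsub : ∀ t : ℝ, 0 < t →
        {a : ES m | t ≤ ‖a‖ ^ (-q)} ⊆ Metric.closedBall 0 (t ^ (-q⁻¹)) := by
      intro t ht a ha
      simp only [mem_setOf_eq] at ha
      have ha0 : a ≠ 0 := by
        rintro rfl
        rw [norm_zero, Real.zero_rpow (by simpa using h0.ne')] at ha
        exact absurd ha (not_le.2 ht)
      rw [Metric.mem_closedBall, dist_zero_right]
      calc ‖a‖ = ‖a‖ ^ ((-q) * (-q⁻¹)) := by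
            rw [neg_mul_neg, mul_inv_cancel₀ h0.ne', Real.rpow_one]
        _ = (‖a‖ ^ (-q)) ^ (-q⁻¹) := Real.rpow_mul (norm_nonneg a) _ _
        _ ≤ t ^ (-q⁻¹) := rpow_le_rpow_of_nonpos ht ha (neg_nonpos.2 (inv_nonneg.2 h0.le))
    have hbound2 : ∀ t : ℝ, t ∈ Ioi (1 : ℝ) →
        μ' {a : ES m | t ≤ ‖a‖ ^ (-q)} ≤ ENNReal.ofReal (t ^ (-q⁻¹ * ((m : ℝ) + 1))) * B := by
      intro t ht
      have ht0 : (0 : ℝ) < t := lt_trans one_pos ht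
      calc μ' {a : ES m | t ≤ ‖a‖ ^ (-q)}
          ≤ μ' (Metric.closedBall 0 (t ^ (-q⁻¹))) := measure_mono (hsub t ht0)
        _ ≤ volume (Metric.closedBall (0 : ES m) (t ^ (-q⁻¹))) := Measure.restrict_le_self _
        _ = ENNReal.ofReal ((t ^ (-q⁻¹)) ^ finrank ℝ (ES m)) * B :=
            Measure.addHaar_closedBall _ _ (rpow_nonneg ht0.le _)
        _ = ENNReal.ofReal (t ^ (-q⁻¹ * ((m : ℝ) + 1))) * B := by
            congr 2
            rw [← Real.rpow_natCast (t ^ (-q⁻¹)) (finrank ℝ (ES m)),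
              ← Real.rpow_mul ht0.le, hdim]
    calc ∫⁻ t in Ioi (0 : ℝ), μ' {a : ES m | t ≤ ‖a‖ ^ (-q)}
        ≤ ∫⁻ t in Ioc (0 : ℝ) 1 ∪ Ioi 1, μ' {a : ES m | t ≤ ‖a‖ ^ (-q)} :=
          lintegral_mono_set Ioi_subset_Ioc_union_Ioi
      _ ≤ (∫⁻ t in Ioc (0 : ℝ) 1, μ' {a : ES m | t ≤ ‖a‖ ^ (-q)})
            + ∫⁻ t in Ioi (1 : ℝ), μ' {a : ES m | t ≤ ‖a‖ ^ (-q)} := lintegral_union_le _ _ _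
      _ < ⊤ := by
          refine ENNReal.add_lt_top.2 ⟨?_, ?_⟩
          · calc (∫⁻ t in Ioc (0 : ℝ) 1, μ' {a : ES m | t ≤ ‖a‖ ^ (-q)})
                ≤ ∫⁻ _ in Ioc (0 : ℝ) 1, B := lintegral_mono fun t => hub _
              _ = B * volume (Ioc (0 : ℝ) 1) := by rw [setLIntegral_const]
              _ < ⊤ := ENNReal.mul_lt_top hBfin (by simp)
          · have hlt : -(q⁻¹ * ((m : ℝ) + 1)) < -1 := by
              rw [neg_lt_neg_iff, inv_mul_eq_div]
              exact (one_lt_div h0).2 hq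
            have hint : IntegrableOn (fun t : ℝ => t ^ (-q⁻¹ * ((m : ℝ) + 1))) (Ioi 1) := by
              rw [show -q⁻¹ * ((m : ℝ) + 1) = -(q⁻¹ * ((m : ℝ) + 1)) by ring]
              exact integrableOn_Ioi_rpow_of_lt hlt one_pos
            have hfin : (∫⁻ t in Ioi (1 : ℝ), ENNReal.ofReal (t ^ (-q⁻¹ * ((m : ℝ) + 1)))) < ⊤ := by
              have := hint.setLIntegral_lt_top
              refine lt_of_le_of_lt (le_of_eq ?_) this
              refine setLIntegral_congr_fun measurableSet_Ioi (fun t ht => ?_)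
              rw [← Real.enorm_eq_ofReal (rpow_nonneg (le_of_lt (lt_trans one_pos ht)) _)]
            calc (∫⁻ t in Ioi (1 : ℝ), μ' {a : ES m | t ≤ ‖a‖ ^ (-q)})
                ≤ ∫⁻ t in Ioi (1 : ℝ), ENNReal.ofReal (t ^ (-q⁻¹ * ((m : ℝ) + 1))) * B :=
                  setLIntegral_mono' measurableSet_Ioi hbound2
              _ = (∫⁻ t in Ioi (1 : ℝ), ENNReal.ofReal (t ^ (-q⁻¹ * ((m : ℝ) + 1)))) * B :=
                  lintegral_mul_const' _ _ hBfin.ne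
              _ < ⊤ := ENNReal.mul_lt_top hfin hBfin

lemma taylor_bound {m : ℕ} {β C : ℝ} {u : ES m → ℝ} (hu : ContDiff ℝ 1 u) (hβ : 0 ≤ β)
    (hC : 0 ≤ C) (hHol : ∀ x y, ‖fderiv ℝ u x - fderiv ℝ u y‖ ≤ C * ‖x - y‖ ^ β)
    (s t : ES m) :
    |u s - u (s - t) - fderiv ℝ u (s - t) t| ≤ C * ‖t‖ ^ β * ‖t‖ := by
  have hdiff : ∀ x ∈ segment ℝ (s - t) s, DifferentiableAt ℝ u x := fun x _ =>
    hu.differentiable one_ne_zero x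
  have hbound : ∀ z ∈ segment ℝ (s - t) s,
      ‖fderiv ℝ u z - fderiv ℝ u (s - t)‖ ≤ C * ‖t‖ ^ β := by
    rintro z ⟨a, b, ha, hb, hab, rfl⟩
    have hA : a = 1 - b := by linarith
    subst hA
    have hz : (1 - b) • (s - t) + b • s - (s - t) = b • t := by module
    refine le_trans (hHol _ _) ?_
    rw [hz, norm_smul, Real.norm_eq_abs, abs_of_nonneg hb]
    have : b * ‖t‖ ≤ ‖t‖ := by nlinarith [norm_nonneg t]
    exact mul_le_mul_of_nonneg_left (Real.rpow_le_rpow (by positivity) this hβ) hC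
  have key := (convex_segment (s - t) s).norm_image_sub_le_of_norm_fderiv_le' hdiff hbound
    (left_mem_segment ℝ (s - t) s) (right_mem_segment ℝ (s - t) s)
  rw [sub_sub_cancel] at key
  simpa [Real.norm_eq_abs] using key

/-- `u` is of class `C^{1,β}` : bounded, continuously differentiable with bounded
gradient, and with `β`-Hölder continuous gradient. -/
def IsC1Beta {n : ℕ} (β : ℝ) (u : EuclideanSpace ℝ (Fin n) → ℝ) : Prop :=
  ContDiff ℝ 1 u ∧ (∃ C, ∀ x, |u x| ≤ C) ∧ (∃ C, ∀ x, ‖fderiv ℝ u x‖ ≤ C) ∧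
    (∃ C, ∀ x y, ‖fderiv ℝ u x - fderiv ℝ u y‖ ≤ C * ‖x - y‖ ^ β)

/-- the two integrands in the geometric expression of the nonlocal mean
curvature of `E_u` are Lebesgue integrable on `ℝ^{N-1}`.  Here `N = m + 2 ≥ 2`. -/
theorem statement_1 (m : ℕ) (α β : ℝ) (hα : α ∈ Set.Ioo (0 : ℝ) 1)
    (hβ : β ∈ Set.Ioo α 1) (u : ES m → ℝ) (hu : IsC1Beta β u)
    (hpos : ∃ δ > 0, ∀ x, δ ≤ u x) (s : ES m) :
    Integrable (fun t : ES m => (u s - u (s - t) - fderiv ℝ u (s - t) t) /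
        (‖t‖ ^ 2 + (u s - u (s - t)) ^ 2) ^ (((m : ℝ) + 2 + α) / 2)) ∧
      Integrable (fun t : ES m => (u s + u (s - t) + fderiv ℝ u (s - t) t) /
        (‖t‖ ^ 2 + (u s + u (s - t)) ^ 2) ^ (((m : ℝ) + 2 + α) / 2)) := by
  obtain ⟨hu1, ⟨Cu, hCu⟩, ⟨Cd, hCd⟩, ⟨CH, hCH⟩⟩ := hu
  obtain ⟨δ, hδ, hδu⟩ := hpos
  obtain ⟨hα0, hα1⟩ := hα
  obtain ⟨hβα, hβ1⟩ := hβ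
  have hβ0 : 0 < β := lt_trans hα0 hβα
  have hm0 : (0 : ℝ) ≤ (m : ℝ) := Nat.cast_nonneg m
  have hCu0 : 0 ≤ Cu := le_trans (abs_nonneg _) (hCu 0)
  have hCd0 : 0 ≤ Cd := le_trans (norm_nonneg _) (hCd 0)
  set CH' := |CH| with hCH'def
  have hCH'0 : 0 ≤ CH' := abs_nonneg _
  have hCH' : ∀ x y, ‖fderiv ℝ u x - fderiv ℝ u y‖ ≤ CH' * ‖x - y‖ ^ β := fun x y =>
    le_trans (hCH x y)
      (mul_le_mul_of_nonneg_right (le_abs_self _) (rpow_nonneg (norm_nonneg _) _))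
  set p : ℝ := ((m : ℝ) + 2 + α) / 2 with hpdef
  set A : ℝ := (m : ℝ) + 2 + α with hAdef
  set r : ℝ := (m : ℝ) + 1 + α with hrdef
  have hp0 : 0 < p := by rw [hpdef]; positivity
  have h2p : 2 * p = A := by rw [hpdef, hAdef]; ring
  have hr0 : 0 < r := by rw [hrdef]; positivity
  have hdim : (finrank ℝ (ES m) : ℝ) = (m : ℝ) + 1 := by
    simp [finrank_euclideanSpace]
  -- continuity facts
  have hcu : Continuous u := hu1.continuous
  have hust : Continuous fun t : ES m => u (s - t) :=
    hcu.comp (continuous_const.sub continuous_id)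
  have hcd' : Continuous fun t : ES m => (fderiv ℝ u (s - t)) t :=
    (((hu1.continuous_fderiv one_ne_zero).comp (continuous_const.sub continuous_id)).clm_apply
      continuous_id)
  have hm1 : AEStronglyMeasurable (fun t : ES m => (u s - u (s - t) - fderiv ℝ u (s - t) t) /
      (‖t‖ ^ 2 + (u s - u (s - t)) ^ 2) ^ p) volume := by
    apply Measurable.aestronglyMeasurable
    exact ((continuous_const.sub hust).sub hcd').measurable.div
      (((continuous_norm.pow 2).add ((continuous_const.sub hust).pow 2)).rpow_const
        (fun x => Or.inr hp0.le)).measurable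
  have hm2 : AEStronglyMeasurable (fun t : ES m => (u s + u (s - t) + fderiv ℝ u (s - t) t) /
      (‖t‖ ^ 2 + (u s + u (s - t)) ^ 2) ^ p) volume := by
    apply Measurable.aestronglyMeasurable
    exact ((continuous_const.add hust).add hcd').measurable.div
      (((continuous_norm.pow 2).add ((continuous_const.add hust).pow 2)).rpow_const
        (fun x => Or.inr hp0.le)).measurable
  -- denominator lower bound
  have hden : ∀ (w : ℝ) (t : ES m), ‖t‖ ^ A ≤ (‖t‖ ^ 2 + w ^ 2) ^ p := by
    intro w t
    have h1 : (‖t‖ ^ 2 : ℝ) ≤ ‖t‖ ^ 2 + w ^ 2 := le_add_of_nonneg_right (sq_nonneg w)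
    have h2 : ‖t‖ ^ A = ((‖t‖ ^ 2 : ℝ)) ^ p := by
      rw [← h2p, Real.rpow_mul (norm_nonneg t), Real.rpow_two]
    rw [h2]
    exact Real.rpow_le_rpow (by positivity) h1 hp0.le
  -- generic quotient bound
  have habs : ∀ (t : ES m) (a w : ℝ), t ≠ 0 →
      |a / (‖t‖ ^ 2 + w ^ 2) ^ p| ≤ |a| / ‖t‖ ^ A := by
    intro t a w ht
    have htn : 0 < ‖t‖ := norm_pos_iff.2 ht
    rw [abs_div, abs_of_nonneg (Real.rpow_nonneg (by positivity) p)]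
    gcongr
    exact hden w t
  -- triangle inequalities for the numerators
  have hL : ∀ t : ES m, |fderiv ℝ u (s - t) t| ≤ Cd * ‖t‖ := by
    intro t
    calc |fderiv ℝ u (s - t) t| = ‖fderiv ℝ u (s - t) t‖ := (Real.norm_eq_abs _).symm
      _ ≤ ‖fderiv ℝ u (s - t)‖ * ‖t‖ := ContinuousLinearMap.le_opNorm _ _
      _ ≤ Cd * ‖t‖ := mul_le_mul_of_nonneg_right (hCd _) (norm_nonneg _)
  have hnumB1 : ∀ t : ES m, |u s - u (s - t) - fderiv ℝ u (s - t) t| ≤ 2 * Cu + Cd * ‖t‖ := by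
    intro t
    have h3 := abs_add_three (u s) (-(u (s - t))) (-(fderiv ℝ u (s - t) t))
    simp only [abs_neg] at h3
    rw [← sub_eq_add_neg, ← sub_eq_add_neg] at h3
    have := hCu s; have := hCu (s - t); have := hL t
    linarith
  have hnumB2 : ∀ t : ES m, |u s + u (s - t) + fderiv ℝ u (s - t) t| ≤ 2 * Cu + Cd * ‖t‖ := by
    intro t
    have h3 := abs_add_three (u s) (u (s - t)) (fderiv ℝ u (s - t) t)
    have := hCu s; have := hCu (s - t); have := hL t
    linarith
  -- tail bound
  have htail : ∀ (t : ES m) (a w : ℝ), 1 ≤ ‖t‖ → |a| ≤ 2 * Cu + Cd * ‖t‖ →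
      |a / (‖t‖ ^ 2 + w ^ 2) ^ p| ≤ ((2 * Cu + Cd) * 2 ^ r) * (1 + ‖t‖) ^ (-r) := by
    intro t a w h1t ha
    have htn : (0 : ℝ) < ‖t‖ := lt_of_lt_of_le one_pos h1t
    have ht0 : t ≠ 0 := norm_pos_iff.1 htn
    have step2 : |a| / ‖t‖ ^ A ≤ (2 * Cu + Cd) * ‖t‖ / ‖t‖ ^ A := by
      have hub : |a| ≤ (2 * Cu + Cd) * ‖t‖ := by nlinarith
      gcongr
    have step3 : (2 * Cu + Cd) * ‖t‖ / ‖t‖ ^ A = (2 * Cu + Cd) * ‖t‖ ^ (-r) := by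
      rw [mul_div_assoc]
      congr 1
      rw [show ‖t‖ ^ (-r) = ‖t‖ ^ ((1 : ℝ) - A) by rw [hrdef, hAdef]; ring_nf,
        Real.rpow_sub htn, Real.rpow_one]
    have step4 : ‖t‖ ^ (-r) ≤ 2 ^ r * (1 + ‖t‖) ^ (-r) := by
      have hhalf : (1 + ‖t‖) / 2 ≤ ‖t‖ := by linarith
      have h5 : ‖t‖ ^ (-r) ≤ ((1 + ‖t‖) / 2) ^ (-r) :=
        rpow_le_rpow_of_nonpos (by positivity) hhalf (neg_nonpos.2 hr0.le)
      refine h5.trans (le_of_eq ?_)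
      rw [Real.div_rpow (by positivity) (by norm_num),
        Real.rpow_neg (by norm_num : (0 : ℝ) ≤ 2), div_inv_eq_mul, mul_comm]
    calc |a / (‖t‖ ^ 2 + w ^ 2) ^ p| ≤ |a| / ‖t‖ ^ A := habs t a w ht0
      _ ≤ (2 * Cu + Cd) * ‖t‖ / ‖t‖ ^ A := step2
      _ = (2 * Cu + Cd) * ‖t‖ ^ (-r) := step3
      _ ≤ (2 * Cu + Cd) * (2 ^ r * (1 + ‖t‖) ^ (-r)) :=
          mul_le_mul_of_nonneg_left step4 (by linarith)
      _ = ((2 * Cu + Cd) * 2 ^ r) * (1 + ‖t‖) ^ (-r) := by ring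
  have hInt_tail : Integrable (fun t : ES m =>
      ((2 * Cu + Cd) * 2 ^ r) * (1 + ‖t‖) ^ (-r)) volume := by
    refine (integrable_one_add_norm ?_).const_mul _
    rw [hdim, hrdef]; linarith
  -- the complement of the unit ball, as an ae statement helper
  have hcompl : ∀ F : ES m → ℝ, AEStronglyMeasurable F volume →
      (∀ t : ES m, 1 ≤ ‖t‖ → ‖F t‖ ≤ ((2 * Cu + Cd) * 2 ^ r) * (1 + ‖t‖) ^ (-r)) →
      IntegrableOn F (Metric.ball (0 : ES m) 1)ᶜ := by
    intro F hF hb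
    refine Integrable.mono' hInt_tail.integrableOn hF.restrict ?_
    filter_upwards [ae_restrict_mem measurableSet_ball.compl] with t ht
    refine hb t ?_
    simpa [Metric.mem_ball, dist_zero_right] using ht
  have hae0 : ∀ᵐ t : ES m ∂(volume.restrict (Metric.ball (0 : ES m) 1)), t ≠ 0 := by
    refine ae_restrict_of_ae ?_
    rw [ae_iff]
    have : {a : ES m | ¬a ≠ 0} = {(0 : ES m)} := by
      ext a; simp
    rw [this]
    exact measure_singleton _
  constructor
  · -- first integrand
    rw [← integrableOn_univ, ← Set.union_compl_self (Metric.ball (0 : ES m) 1)]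
    refine IntegrableOn.union ?_ ?_
    · -- near zero
      set q : ℝ := (m : ℝ) + 1 + α - β with hqdef
      have hq0 : 0 < q := by rw [hqdef]; linarith
      have hql : q < (m : ℝ) + 1 := by rw [hqdef]; linarith
      refine Integrable.mono' ((integrableOn_norm_rpow_ball m hq0 hql).const_mul CH')
        hm1.restrict ?_
      filter_upwards [hae0] with t ht
      have htn : 0 < ‖t‖ := norm_pos_iff.2 ht
      rw [Real.norm_eq_abs]
      calc |(u s - u (s - t) - fderiv ℝ u (s - t) t) / (‖t‖ ^ 2 + (u s - u (s - t)) ^ 2) ^ p|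
          ≤ |u s - u (s - t) - fderiv ℝ u (s - t) t| / ‖t‖ ^ A := habs t _ _ ht
        _ ≤ (CH' * ‖t‖ ^ β * ‖t‖) / ‖t‖ ^ A := by
            gcongr
            exact taylor_bound hu1 hβ0.le hCH'0 hCH' s t
        _ = CH' * ‖t‖ ^ (-q) := by
            rw [show CH' * ‖t‖ ^ β * ‖t‖ = CH' * (‖t‖ ^ β * ‖t‖ ^ (1 : ℝ)) by
                rw [Real.rpow_one]; ring,
              ← Real.rpow_add htn, mul_div_assoc, ← Real.rpow_sub htn]
            congr 1
            rw [hqdef, hAdef]; ring_nf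
    · -- tail
      exact hcompl _ hm1 fun t h1t => by
        rw [Real.norm_eq_abs]; exact htail t _ _ h1t (hnumB1 t)
  · -- second integrand
    rw [← integrableOn_univ, ← Set.union_compl_self (Metric.ball (0 : ES m) 1)]
    refine IntegrableOn.union ?_ ?_
    · -- near zero : bounded by a constant
      have hden2 : ∀ t : ES m,
          (((2 * δ) ^ 2 : ℝ)) ^ p ≤ (‖t‖ ^ 2 + (u s + u (s - t)) ^ 2) ^ p := by
        intro t
        refine Real.rpow_le_rpow (by positivity) ?_ hp0.le
        have h1 : 2 * δ ≤ u s + u (s - t) := by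
          have := hδu s; have := hδu (s - t); linarith
        nlinarith [sq_nonneg ‖t‖]
      have hc : IntegrableOn (fun _ : ES m => (2 * Cu + Cd) / (((2 * δ) ^ 2 : ℝ)) ^ p)
          (Metric.ball (0 : ES m) 1) :=
        integrableOn_const measure_ball_lt_top.ne
      refine Integrable.mono' hc hm2.restrict ?_
      filter_upwards [ae_restrict_mem measurableSet_ball] with t ht
      have htb : ‖t‖ ≤ 1 := by
        have := Metric.mem_ball.1 ht
        rw [dist_zero_right] at this
        linarith
      rw [Real.norm_eq_abs, abs_div, abs_of_nonneg (Real.rpow_nonneg (by positivity) p)]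
      refine div_le_div₀ (by positivity) ?_ (Real.rpow_pos_of_pos (by positivity) p) (hden2 t)
      have := hnumB2 t
      nlinarith [hL t, hCu s, hCu (s - t)]
    · -- tail
      exact hcompl _ hm2 fun t h1t => by
        rw [Real.norm_eq_abs]; exact htail t _ _ h1t (hnumB2 t)
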